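/- Let Ā = [ā1, …, ā_d] ∈ R^{n×d} have unit-norm columns with pairwise inner products r̄_{ji} = āⱼᵀāᵢ for j ≠ i, and let V = [v1, …, v_d] be the Gram–Schmidt orthonormalization of Ā. Writing V − Ā = Ā Ū with Ū = (ū_{ji}) upper triangular, the diagonal entries satisfy ū_{ii} = O(‖R̄‖_F²) and the strictly upper entries satisfy ū_{ji} = −r̄_{ji} + o(‖R̄‖_F) as R̄ = ĀᵀĀ − I → 0; more precisely, lim sup_{R̄→0} ū_{ii}/‖R̄‖_F² ≤ 1/4 and lim_{R̄→0} (ū_{ji} + r̄_{ji})/‖R̄‖_F = 0 for j < i. -/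

import Mathlib

open MeasureTheory Filter Matrix

noncomputable def frob {m n : Type*} [Fintype m] [Fintype n] (M : Matrix m n ℝ) : ℝ :=
  Real.sqrt (∑ i, ∑ j, (M i j)^2)

/-- The Gram–Schmidt orthonormalization of a family of vectors (Mathlib's
`gramSchmidtNormed`, with instances spelled out). -/
noncomputable def gsNormed {n d : ℕ} (abar : Fin d → EuclideanSpace ℝ (Fin n)) :
    Fin d → EuclideanSpace ℝ (Fin n) :=
  @InnerProductSpace.gramSchmidtNormed ℝ _ _ _ _ (Fin d) _ _ (inferInstanceAs (WellFoundedLT (Fin d))) abar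

section aux

lemma frob_nonneg' {m n : Type*} [Fintype m] [Fintype n] (M : Matrix m n ℝ) : 0 ≤ frob M :=
  Real.sqrt_nonneg _

lemma frob_sq' {m n : Type*} [Fintype m] [Fintype n] (M : Matrix m n ℝ) :
    (frob M)^2 = ∑ i, ∑ j, (M i j)^2 := by
  apply Real.sq_sqrt
  exact Finset.sum_nonneg fun i _ => Finset.sum_nonneg fun j _ => sq_nonneg _

lemma abs_entry_le_frob' {m n : Type*} [Fintype m] [Fintype n] (M : Matrix m n ℝ) (i : m) (j : n) :
    |M i j| ≤ frob M := by
  have h1 : (M i j)^2 ≤ (frob M)^2 := by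
    rw [frob_sq']
    calc (M i j)^2 ≤ ∑ j', (M i j')^2 :=
          Finset.single_le_sum (f := fun j' => (M i j')^2) (fun _ _ => sq_nonneg _)
            (Finset.mem_univ j)
      _ ≤ ∑ i', ∑ j', (M i' j')^2 :=
          Finset.single_le_sum (f := fun i' => ∑ j', (M i' j')^2)
            (fun _ _ => Finset.sum_nonneg fun _ _ => sq_nonneg _) (Finset.mem_univ i)
  calc |M i j| = Real.sqrt ((M i j)^2) := (Real.sqrt_sq_eq_abs _).symm
    _ ≤ Real.sqrt ((frob M)^2) := Real.sqrt_le_sqrt h1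
    _ = frob M := by rw [Real.sqrt_sq (frob_nonneg' M)]

lemma parseval_aux' {E : Type*} [NormedAddCommGroup E] [InnerProductSpace ℝ E] {ι : Type*}
    [LinearOrder ι] [LocallyFiniteOrderBot ι]
    (v : ι → E) (hv : Orthonormal ℝ v) (x : E) (i : ι)
    (hx : x ∈ Submodule.span ℝ (v '' Set.Iic i)) :
    ∑ m ∈ Finset.Iic i, (inner ℝ (v m) x : ℝ)^2 = ‖x‖^2 := by
  obtain ⟨l, hl, rfl⟩ := (Finsupp.mem_span_image_iff_linearCombination ℝ).1 hx
  have hsupp : l.support ⊆ Finset.Iic i := by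
    intro m hm
    exact Finset.mem_Iic.2 (hl hm)
  have h1 : ∀ m, (inner ℝ (v m) (Finsupp.linearCombination ℝ v l) : ℝ) = l m :=
    fun m => hv.inner_right_finsupp l m
  have h2 : ‖Finsupp.linearCombination ℝ v l‖^2
      = (inner ℝ (Finsupp.linearCombination ℝ v l) (Finsupp.linearCombination ℝ v l) : ℝ) :=
    (real_inner_self_eq_norm_sq _).symm
  rw [h2, hv.inner_finsupp_eq_sum_left l l]
  simp only [h1]
  rw [Finsupp.sum]
  rw [Finset.sum_subset hsupp]
  · exact Finset.sum_congr rfl fun m _ => by simp [sq, starRingEnd_apply]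
  · intro m _ hm
    simp [Finsupp.notMem_support_iff.1 hm]

lemma li_of_small' {n d : ℕ} (abar : Fin d → EuclideanSpace ℝ (Fin n))
    (Rbar : Matrix (Fin d) (Fin d) ℝ)
    (hR : ∀ j i, Rbar j i = (inner ℝ (abar j) (abar i) : ℝ) - if j = i then 1 else 0)
    (hent : ∀ j i, |Rbar j i| ≤ (1:ℝ) / (2 * (d+1))) :
    LinearIndependent ℝ abar := by
  rw [Fintype.linearIndependent_iff]
  intro c hc j
  obtain ⟨j0, _, hj0⟩ := Finset.exists_max_image Finset.univ (fun l => |c l|) ⟨j, Finset.mem_univ _⟩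
  have hinner : (inner ℝ (abar j0) (∑ l, c l • abar l) : ℝ) = 0 := by rw [hc]; simp
  rw [inner_sum] at hinner
  simp only [real_inner_smul_right] at hinner
  have hexp : ∀ l, (inner ℝ (abar j0) (abar l) : ℝ) = Rbar j0 l + if j0 = l then 1 else 0 := by
    intro l; rw [hR j0 l]; ring
  rw [Finset.sum_congr rfl (fun l _ => by rw [hexp l])] at hinner
  have hsplit : ∑ l, c l * (Rbar j0 l + if j0 = l then 1 else 0)
      = (∑ l, c l * Rbar j0 l) + c j0 := by
    have : ∀ l : Fin d, c l * (Rbar j0 l + if j0 = l then 1 else 0)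
        = c l * Rbar j0 l + if j0 = l then c l else 0 := by
      intro l; by_cases h : j0 = l <;> simp [h] <;> ring
    rw [Finset.sum_congr rfl (fun l _ => this l), Finset.sum_add_distrib,
      Finset.sum_ite_eq Finset.univ j0 (fun l => c l)]
    simp
  rw [hsplit] at hinner
  have hb : |c j0| ≤ (d:ℝ) * ((1 / (2 * ((d:ℝ)+1))) * |c j0|) := by
    have h1 : c j0 = -(∑ l, c l * Rbar j0 l) := by linarith
    have key : |∑ l, c l * Rbar j0 l| ≤ (d:ℝ) * ((1 / (2 * ((d:ℝ)+1))) * |c j0|) :=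
      calc |∑ l, c l * Rbar j0 l| ≤ ∑ l, |c l * Rbar j0 l| := Finset.abs_sum_le_sum_abs _ _
        _ ≤ ∑ _l : Fin d, (1 / (2 * ((d:ℝ)+1))) * |c j0| := by
            apply Finset.sum_le_sum
            intro l _
            rw [abs_mul, mul_comm]
            exact mul_le_mul (hent j0 l) (hj0 l (Finset.mem_univ l)) (abs_nonneg _)
              (by positivity)
        _ = (d:ℝ) * ((1 / (2 * ((d:ℝ)+1))) * |c j0|) := by
            rw [Finset.sum_const, Finset.card_univ, Fintype.card_fin, nsmul_eq_mul]
    calc |c j0| = |∑ l, c l * Rbar j0 l| := by rw [h1, abs_neg]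
      _ ≤ _ := key
  have hz : |c j0| = 0 := by
    by_contra h
    have habs : 0 < |c j0| := lt_of_le_of_ne (abs_nonneg _) (Ne.symm h)
    have hd2 : (d:ℝ) * (1 / (2 * ((d:ℝ)+1))) < 1 := by
      rw [mul_one_div, div_lt_one (by positivity)]
      nlinarith [Nat.cast_nonneg (α := ℝ) d]
    nlinarith
  have := hj0 j (Finset.mem_univ j)
  rw [hz] at this
  exact abs_eq_zero.1 (le_antisymm this (abs_nonneg _))

lemma gs_inner_self_nonneg' {E : Type*} [NormedAddCommGroup E] [InnerProductSpace ℝ E]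
    {ι : Type*} [LinearOrder ι] [LocallyFiniteOrderBot ι] [WellFoundedLT ι]
    (f : ι → E) (i : ι) :
    0 ≤ (inner ℝ (InnerProductSpace.gramSchmidtNormed ℝ f i) (f i) : ℝ) := by
  have key : (inner ℝ (InnerProductSpace.gramSchmidt ℝ f i) (f i) : ℝ) = ‖InnerProductSpace.gramSchmidt ℝ f i‖^2 := by
    conv_lhs => rw [InnerProductSpace.gramSchmidt_def'' ℝ f i]
    rw [inner_add_right, real_inner_self_eq_norm_sq, inner_sum]
    rw [Finset.sum_eq_zero, add_zero]
    intro m hm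
    rw [real_inner_smul_right, InnerProductSpace.gramSchmidt_orthogonal ℝ f (Finset.mem_Iio.1 hm).ne', mul_zero]
  rw [InnerProductSpace.gramSchmidtNormed, real_inner_smul_left, key]
  positivity

lemma sum_le_d' {d : ℕ} (f : Fin d → ℝ) (c : ℝ) (h : ∀ l, f l ≤ c) :
    ∑ l, f l ≤ (d:ℝ) * c := by
  calc ∑ l, f l ≤ ∑ _l : Fin d, c := Finset.sum_le_sum fun l _ => h l
    _ = (d:ℝ) * c := by rw [Finset.sum_const, Finset.card_univ, Fintype.card_fin, nsmul_eq_mul]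

lemma sum_Iio_le_d' {d : ℕ} (i : Fin d) (f : Fin d → ℝ) (c : ℝ) (hc : 0 ≤ c)
    (h : ∀ l, l < i → f l ≤ c) :
    ∑ l ∈ Finset.Iio i, f l ≤ (d:ℝ) * c := by
  calc ∑ l ∈ Finset.Iio i, f l ≤ ∑ _l ∈ Finset.Iio i, c :=
        Finset.sum_le_sum fun l hl => h l (Finset.mem_Iio.1 hl)
    _ = (Finset.Iio i).card • c := by rw [Finset.sum_const]
    _ ≤ (d:ℝ) * c := by
        rw [nsmul_eq_mul]
        apply mul_le_mul_of_nonneg_right _ hc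
        calc ((Finset.Iio i).card : ℝ) ≤ (Finset.univ (α := Fin d)).card := by
              exact_mod_cast Finset.card_le_card (Finset.subset_univ _)
          _ = (d:ℝ) := by rw [Finset.card_univ, Fintype.card_fin]

lemma gsNormed_orthonormal {n d : ℕ} (abar : Fin d → EuclideanSpace ℝ (Fin n))
    (h : LinearIndependent ℝ abar) : Orthonormal ℝ (gsNormed abar) :=
  @InnerProductSpace.gramSchmidtNormed_orthonormal ℝ _ _ _ _ (Fin d) _ _ (inferInstanceAs (WellFoundedLT (Fin d))) abar h

lemma gsNormed_mem_span {n d : ℕ} (abar : Fin d → EuclideanSpace ℝ (Fin n)) (i : Fin d) :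
    abar i ∈ Submodule.span ℝ (gsNormed abar '' Set.Iic i) := by
  have h1 := @InnerProductSpace.span_gramSchmidtNormed ℝ _ _ _ _ (Fin d) _ _
    (inferInstanceAs (WellFoundedLT (Fin d))) abar (Set.Iic i)
  have h2 := @InnerProductSpace.span_gramSchmidt_Iic ℝ _ _ _ _ (Fin d) _ _
    (inferInstanceAs (WellFoundedLT (Fin d))) abar i
  show abar i ∈ Submodule.span ℝ
    ((@InnerProductSpace.gramSchmidtNormed ℝ _ _ _ _ (Fin d) _ _ (inferInstanceAs (WellFoundedLT (Fin d))) abar)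
      '' Set.Iic i)
  rw [h1, h2]
  exact Submodule.subset_span ⟨i, Set.mem_Iic.2 le_rfl, rfl⟩

lemma gsNormed_inner_self_nonneg {n d : ℕ} (abar : Fin d → EuclideanSpace ℝ (Fin n)) (i : Fin d) :
    0 ≤ (inner ℝ (gsNormed abar i) (abar i) : ℝ) :=
  @gs_inner_self_nonneg' (EuclideanSpace ℝ (Fin n)) _ _ (Fin d) _ _
    (inferInstanceAs (WellFoundedLT (Fin d))) abar i

end aux

set_option maxHeartbeats 1000000 in
lemma gs_stepA {n d : ℕ} (b C ρ : ℝ)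
    (abar v : Fin d → EuclideanSpace ℝ (Fin n))
    (Rbar Ubar : Matrix (Fin d) (Fin d) ℝ)
    (hbdef : b = 100 * ((d:ℝ) + 1))
    (hCb : ∀ k : ℕ, k ≤ d + 1 → b ^ k ≤ C)
    (hb1 : (1:ℝ) ≤ b)
    (hC1 : (1:ℝ) ≤ C) (hC100 : (100:ℝ) ≤ C) (hdC : (d:ℝ) ≤ C) (hd0 : (0:ℝ) ≤ (d:ℝ))
    (hρpos : 0 < ρ) (hρ1 : ρ ≤ 1) (hρ3 : ρ * (C*C*C) ≤ 1)
    (hCρ : C * ρ ≤ 1) (hdρ : (d:ℝ) * ρ ≤ 1/100)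
    (hunit : ∀ i, ‖abar i‖ = 1)
    (hR : ∀ j i, Rbar j i = (inner ℝ (abar j) (abar i) : ℝ) - if j = i then 1 else 0)
    (hent : ∀ k j, |Rbar k j| ≤ ρ)
    (hRdiag : ∀ k, Rbar k k = 0)
    (hRsym : ∀ k j, Rbar k j = Rbar j k)
    (hv1 : ∀ i, ‖v i‖ = 1)
    (hvv : ∀ (i j : Fin d), i ≠ j → (inner ℝ (v i) (v j) : ℝ) = 0)
    (htri : ∀ i j : Fin d, j < i → Ubar i j = 0)
    (hE : ∀ k i, Ubar k i
      = ((inner ℝ (abar k) (v i) : ℝ) - (inner ℝ (abar k) (abar i) : ℝ)) - ∑ l, Ubar l i * Rbar k l)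
    (hvma : ∀ m, v m - abar m = ∑ l, Ubar l m • abar l)
    (hnorm : ∀ m, ‖v m - abar m‖ ≤ ∑ l, |Ubar l m|)
    (hq : ∀ i : Fin d,
      (inner ℝ (v i) (abar i) : ℝ) ≤ 1 ∧ 0 ≤ (inner ℝ (v i) (abar i) : ℝ) ∧
      (inner ℝ (v i) (abar i) : ℝ)^2 + ∑ m ∈ Finset.Iio i, (inner ℝ (v m) (abar i) : ℝ)^2 = 1) :
    ∀ i : Fin d, ∀ j, |Ubar j i| ≤ b ^ (i.val + 1) * ρ := by
    suffices H : ∀ N : ℕ, ∀ i : Fin d, i.val = N → ∀ j, |Ubar j i| ≤ b ^ (i.val + 1) * ρ from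
      fun i => H i.val i rfl
    intro N
    induction N using Nat.strong_induction_on with
    | _ N ih =>
    intro i hiN j
    have hIH : ∀ m : Fin d, m < i → ∀ l, |Ubar l m| ≤ b ^ i.val * ρ := by
      intro m hm l
      have hmv : m.val < i.val := hm
      refine le_trans (ih m.val (by omega) m rfl l)
        (mul_le_mul_of_nonneg_right (pow_le_pow_right₀ hb1 (by omega)) hρpos.le)
    set B : ℝ := b ^ i.val with hBdef
    have hB1 : (1:ℝ) ≤ B := one_le_pow₀ hb1
    have hbBC : b * B ≤ C := by
      have h1 : b * B = b ^ (i.val + 1) := by rw [hBdef, pow_succ]; ring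
      rw [h1]
      exact hCb (i.val+1) (by omega)
    have hdB : (d:ℝ) * B ≤ C / 100 := by
      have h1 : (d:ℝ) * B ≤ (b/100) * B := by
        apply mul_le_mul_of_nonneg_right _ (by linarith)
        rw [hbdef]; linarith
      have h2 : (b/100) * B ≤ C/100 := by linarith
      linarith
    have hdBC : (d:ℝ) * B + 1 ≤ C := by linarith
    have hdBpos : (0:ℝ) ≤ (d:ℝ)*B + 1 := by positivity
    have hnorm_e : ∀ m, m < i → ‖v m - abar m‖ ≤ (d:ℝ) * (B * ρ) :=
      fun m hm => le_trans (hnorm m) (sum_le_d' _ _ (hIH m hm))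
    have hq_e : ∀ m, m < i → |(inner ℝ (v m) (abar i) : ℝ)| ≤ ((d:ℝ)*B + 1) * ρ := by
      intro m hm
      have hmi : m ≠ i := ne_of_lt hm
      have hdc : (inner ℝ (v m) (abar i) : ℝ)
          = (inner ℝ (v m - abar m) (abar i) : ℝ) + (inner ℝ (abar m) (abar i) : ℝ) := by
        rw [inner_sub_left]; ring
      have hai : (inner ℝ (abar m) (abar i) : ℝ) = Rbar m i := by
        rw [hR m i]; simp [hmi]
      rw [hdc, hai]
      calc |(inner ℝ (v m - abar m) (abar i) : ℝ) + Rbar m i|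
          ≤ |(inner ℝ (v m - abar m) (abar i) : ℝ)| + |Rbar m i| := abs_add_le _ _
        _ ≤ (d:ℝ) * (B * ρ) + ρ := by
            refine add_le_add (le_trans (abs_real_inner_le_norm _ _) ?_) (hent m i)
            rw [hunit i, mul_one]
            exact hnorm_e m hm
        _ = ((d:ℝ)*B + 1) * ρ := by ring
    have hw : ∀ k, k ≤ i → |(inner ℝ (abar k) (v i) : ℝ) - (inner ℝ (abar k) (abar i) : ℝ)|
        ≤ ((d:ℝ)*B + 1) * ρ := by
      intro k hk
      rcases lt_or_eq_of_le hk with hlt | heq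
      · have hkne : k ≠ i := ne_of_lt hlt
        have h1 : (inner ℝ (abar k) (v i) : ℝ) = (inner ℝ (abar k - v k) (v i) : ℝ) := by
          rw [inner_sub_left, hvv k i hkne, sub_zero]
        have hai : (inner ℝ (abar k) (abar i) : ℝ) = Rbar k i := by
          rw [hR k i]; simp [hkne]
        rw [h1, hai]
        calc |(inner ℝ (abar k - v k) (v i) : ℝ) - Rbar k i|
            ≤ |(inner ℝ (abar k - v k) (v i) : ℝ)| + |Rbar k i| := abs_sub _ _
          _ ≤ (d:ℝ) * (B * ρ) + ρ := by
              refine add_le_add (le_trans (abs_real_inner_le_norm _ _) ?_) (hent k i)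
              rw [hv1 i, mul_one, ← norm_sub_rev]
              exact hnorm_e k hlt
          _ = ((d:ℝ)*B + 1) * ρ := by ring
      · subst heq
        obtain ⟨hq1, hq0, hqP⟩ := hq k
        have haa : (inner ℝ (abar k) (abar k) : ℝ) = 1 := by
          rw [real_inner_self_eq_norm_sq, hunit k]; norm_num
        have hsym : (inner ℝ (abar k) (v k) : ℝ) = (inner ℝ (v k) (abar k) : ℝ) := real_inner_comm _ _
        have hsum_small : ∑ m ∈ Finset.Iio k, (inner ℝ (v m) (abar k) : ℝ)^2
            ≤ (d:ℝ) * ((((d:ℝ)*B+1)*ρ)^2) := by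
          apply sum_Iio_le_d' k _ _ (by positivity)
          intro m hm
          rw [← sq_abs]
          exact pow_le_pow_left₀ (abs_nonneg _) (hq_e m hm) 2
        have hCCρ : C * (C * ρ) ≤ 1 := by nlinarith
        have hbound : (d:ℝ) * ((((d:ℝ)*B+1)*ρ)^2) ≤ ((d:ℝ)*B+1) * ρ := by
          have h1 : (d:ℝ) * ((((d:ℝ)*B+1)*ρ)^2) = ((d:ℝ)*B+1)*ρ * ((d:ℝ) * (((d:ℝ)*B+1) * ρ)) := by
            ring
          rw [h1]
          have h2 : (d:ℝ) * (((d:ℝ)*B+1) * ρ) ≤ C * (C * ρ) := by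
            apply mul_le_mul hdC _ (by positivity) (by linarith)
            exact mul_le_mul_of_nonneg_right hdBC hρpos.le
          nlinarith [mul_pos hρpos (lt_of_lt_of_le zero_lt_one (by nlinarith : (1:ℝ) ≤ (d:ℝ)*B+1))]
        rw [hsym, haa]
        rw [abs_sub_comm, abs_of_nonneg (by linarith)]
        have hkey : 1 - (inner ℝ (v k) (abar k) : ℝ)
            ≤ ∑ m ∈ Finset.Iio k, (inner ℝ (v m) (abar k) : ℝ)^2 := by nlinarith
        linarith
    obtain ⟨j0, _, hj0⟩ := Finset.exists_max_image Finset.univ (fun l => |Ubar l i|) ⟨i, Finset.mem_univ _⟩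
    rcases le_or_gt j0 i with hj0i | hij0
    · have hsum : |∑ l, Ubar l i * Rbar j0 l| ≤ (d:ℝ) * (|Ubar j0 i| * ρ) := by
        refine le_trans (Finset.abs_sum_le_sum_abs _ _) (sum_le_d' _ _ ?_)
        intro l
        rw [abs_mul]
        exact mul_le_mul (hj0 l (Finset.mem_univ l)) (hent j0 l) (abs_nonneg _) (abs_nonneg _)
      have habs : |Ubar j0 i| ≤ ((d:ℝ)*B+1)*ρ + (d:ℝ) * (|Ubar j0 i| * ρ) := by
        conv_lhs => rw [hE j0 i]
        refine le_trans (abs_sub _ _) (add_le_add (hw j0 hj0i) hsum)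
      have hdρU : (d:ℝ) * (|Ubar j0 i| * ρ) ≤ (1/100) * |Ubar j0 i| := by
        have h1 : (d:ℝ) * (|Ubar j0 i| * ρ) = ((d:ℝ)*ρ) * |Ubar j0 i| := by ring
        rw [h1]
        exact mul_le_mul_of_nonneg_right hdρ (abs_nonneg _)
      have hWpos : (0:ℝ) ≤ ((d:ℝ)*B+1)*ρ := by positivity
      have hU2 : |Ubar j0 i| ≤ 2 * (((d:ℝ)*B+1)*ρ) := by linarith
      calc |Ubar j i| ≤ |Ubar j0 i| := hj0 j (Finset.mem_univ j)
        _ ≤ 2 * (((d:ℝ)*B+1)*ρ) := hU2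
        _ ≤ b ^ (i.val+1) * ρ := by
            rw [pow_succ]
            have hgoal : 2 * ((d:ℝ)*B+1) ≤ B * b := by
              have hdb' : (d:ℝ) ≤ b := by linarith
              nlinarith
            nlinarith
    · have h0 : Ubar j0 i = 0 := htri j0 i hij0
      have : |Ubar j i| ≤ 0 := by
        have := hj0 j (Finset.mem_univ j)
        rw [h0] at this
        simpa using this
      refine le_trans this (by positivity)

set_option maxHeartbeats 1000000 in
lemma gs_diag {n d : ℕ} (b C ρ ε' : ℝ)
    (abar v : Fin d → EuclideanSpace ℝ (Fin n))
    (Rbar Ubar : Matrix (Fin d) (Fin d) ℝ)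
    (hbdef : b = 100 * ((d:ℝ) + 1))
    (hCb : ∀ k : ℕ, k ≤ d + 1 → b ^ k ≤ C)
    (hb1 : (1:ℝ) ≤ b)
    (hC1 : (1:ℝ) ≤ C) (hC100 : (100:ℝ) ≤ C) (hdC : (d:ℝ) ≤ C) (hd0 : (0:ℝ) ≤ (d:ℝ))
    (hρpos : 0 < ρ) (hρ1 : ρ ≤ 1) (hρ3 : ρ * (C*C*C) ≤ 1)
    (hCρ : C * ρ ≤ 1) (hdρ : (d:ℝ) * ρ ≤ 1/100)
    (hunit : ∀ i, ‖abar i‖ = 1)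
    (hR : ∀ j i, Rbar j i = (inner ℝ (abar j) (abar i) : ℝ) - if j = i then 1 else 0)
    (hent : ∀ k j, |Rbar k j| ≤ ρ)
    (hRdiag : ∀ k, Rbar k k = 0)
    (hRsym : ∀ k j, Rbar k j = Rbar j k)
    (hv1 : ∀ i, ‖v i‖ = 1)
    (hvv : ∀ (i j : Fin d), i ≠ j → (inner ℝ (v i) (v j) : ℝ) = 0)
    (htri : ∀ i j : Fin d, j < i → Ubar i j = 0)
    (hE : ∀ k i, Ubar k i
      = ((inner ℝ (abar k) (v i) : ℝ) - (inner ℝ (abar k) (abar i) : ℝ)) - ∑ l, Ubar l i * Rbar k l)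
    (hvma : ∀ m, v m - abar m = ∑ l, Ubar l m • abar l)
    (hnorm : ∀ m, ‖v m - abar m‖ ≤ ∑ l, |Ubar l m|)
    (hq : ∀ i : Fin d,
      (inner ℝ (v i) (abar i) : ℝ) ≤ 1 ∧ 0 ≤ (inner ℝ (v i) (abar i) : ℝ) ∧
      (inner ℝ (v i) (abar i) : ℝ)^2 + ∑ m ∈ Finset.Iio i, (inner ℝ (v m) (abar i) : ℝ)^2 = 1)
    (hε : 0 < ε') (hρe : ρ * C^6 ≤ ε')
    (hAC : ∀ (i j : Fin d), |Ubar j i| ≤ C * ρ)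
    (hstrict : ∀ j i : Fin d, j < i →
      |Ubar j i + Rbar j i| ≤ ((d:ℝ)^2*C^2 + (d:ℝ)*C) * ρ^2)
    (hL3 : ∀ i : Fin d, ∑ l ∈ Finset.Iio i, (Rbar i l)^2 ≤ ρ^2 / 2)
    (hd2 : (d:ℝ)^2 ≤ C^2) (hd3 : (d:ℝ)^3 ≤ C^3) :
    ∀ i, Ubar i i ≤ (1/4 + ε') * ρ^2 := by
    intro i
    obtain ⟨hq1, hq0, hqP⟩ := hq i
    have haa : (inner ℝ (abar i) (abar i) : ℝ) = 1 := by
      rw [real_inner_self_eq_norm_sq, hunit i]; norm_num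
    have hsym : (inner ℝ (abar i) (v i) : ℝ) = (inner ℝ (v i) (abar i) : ℝ) := real_inner_comm _ _
    have hqR : ∀ m, m < i → |(inner ℝ (v m) (abar i) : ℝ) - Rbar m i| ≤ (d:ℝ)*(C*ρ*ρ) := by
      intro m hm
      have hmne : m ≠ i := ne_of_lt hm
      have hai : (inner ℝ (abar m) (abar i) : ℝ) = Rbar m i := by rw [hR m i]; simp [hmne]
      have h1 : (inner ℝ (v m) (abar i) : ℝ) - Rbar m i = (inner ℝ (v m - abar m) (abar i) : ℝ) := by
        rw [inner_sub_left, hai]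
      rw [h1, hvma m, sum_inner]
      refine le_trans (Finset.abs_sum_le_sum_abs _ _) (sum_le_d' _ _ ?_)
      intro l
      rw [real_inner_smul_left, abs_mul]
      rcases le_or_gt l m with hlm | hml
      · have hlne : l ≠ i := ne_of_lt (lt_of_le_of_lt hlm hm)
        have hal : (inner ℝ (abar l) (abar i) : ℝ) = Rbar l i := by rw [hR l i]; simp [hlne]
        rw [hal]
        calc |Ubar l m| * |Rbar l i| ≤ (C*ρ) * ρ :=
              mul_le_mul (hAC m l) (hent l i) (abs_nonneg _) (by positivity)
          _ = C*ρ*ρ := by ring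
      · rw [htri l m hml, abs_zero, zero_mul]
        positivity
    have hdCρρ : (d:ℝ)*(C*ρ*ρ) ≤ ρ := by
      have h1 : (d:ℝ)*(C*ρ*ρ) ≤ C*(C*ρ*ρ) := by
        apply mul_le_mul_of_nonneg_right hdC (by positivity)
      have h2 : C*(C*ρ*ρ) = (C*ρ)*(C*ρ) := by ring
      nlinarith
    have hq2ρ : ∀ m, m < i → |(inner ℝ (v m) (abar i) : ℝ)| ≤ 2*ρ := by
      intro m hm
      have h1 := hqR m hm
      have h2 := hent m i
      calc |(inner ℝ (v m) (abar i) : ℝ)|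
          = |((inner ℝ (v m) (abar i) : ℝ) - Rbar m i) + Rbar m i| := by ring_nf
        _ ≤ |(inner ℝ (v m) (abar i) : ℝ) - Rbar m i| + |Rbar m i| := abs_add_le _ _
        _ ≤ (d:ℝ)*(C*ρ*ρ) + ρ := add_le_add h1 h2
        _ ≤ 2*ρ := by linarith
    have hsq : ∀ m, m < i →
        (Rbar m i)^2 - (inner ℝ (v m) (abar i) : ℝ)^2 ≤ 3*ρ*((d:ℝ)*(C*ρ*ρ)) := by
      intro m hm
      obtain ⟨e1, e2⟩ := abs_le.1 (hqR m hm)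
      obtain ⟨f1, f2⟩ := abs_le.1 (hq2ρ m hm)
      obtain ⟨g1, g2⟩ := abs_le.1 (hent m i)
      nlinarith [sq_nonneg ((inner ℝ (v m) (abar i) : ℝ) - Rbar m i)]
    -- named sums
    have hS31 : (∑ m ∈ Finset.Iio i, (Rbar m i)^2) - (∑ m ∈ Finset.Iio i, (inner ℝ (v m) (abar i) : ℝ)^2)
        ≤ (d:ℝ) * (3*ρ*((d:ℝ)*(C*ρ*ρ))) := by
      rw [← Finset.sum_sub_distrib]
      exact sum_Iio_le_d' i _ _ (by positivity) hsq
    have hS23 : (∑ m ∈ Finset.Iio i, (Rbar m i)^2) = ∑ l ∈ Finset.Iio i, (Rbar i l)^2 :=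
      Finset.sum_congr rfl fun k _ => by rw [hRsym k i]
    have hWi : (inner ℝ (abar i) (v i) : ℝ) - 1
        ≤ -(1/2) * ∑ m ∈ Finset.Iio i, (inner ℝ (v m) (abar i) : ℝ)^2 := by
      rw [hsym]
      nlinarith [sq_nonneg (1 - (inner ℝ (v i) (abar i) : ℝ))]
    have hRu : -(∑ l, Ubar l i * Rbar i l)
        ≤ (∑ l ∈ Finset.Iio i, (Rbar i l)^2)
          + (d:ℝ)*(ρ*(((d:ℝ)^2*C^2 + (d:ℝ)*C) * ρ^2)) := by
      have hper : ∀ l, -(Ubar l i * Rbar i l)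
          ≤ (if l < i then (Rbar i l)^2 else 0) + ρ*(((d:ℝ)^2*C^2 + (d:ℝ)*C) * ρ^2) := by
        intro l
        rcases lt_trichotomy l i with hl | hl | hl
        · obtain ⟨e1, e2⟩ := abs_le.1 (hstrict l i hl)
          obtain ⟨g1, g2⟩ := abs_le.1 (hent i l)
          have hsymm : Rbar l i = Rbar i l := hRsym l i
          simp only [hl, if_true]
          nlinarith
        · subst hl
          rw [hRdiag l, mul_zero, neg_zero]
          have : ¬ (l < l) := lt_irrefl l
          simp only [this, if_false, zero_add]
          positivity
        · rw [htri l i hl, zero_mul, neg_zero]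
          have : ¬ (l < i) := not_lt.2 hl.le
          simp only [this, if_false, zero_add]
          positivity
      calc -(∑ l, Ubar l i * Rbar i l) = ∑ l, -(Ubar l i * Rbar i l) := by
            rw [← Finset.sum_neg_distrib]
        _ ≤ ∑ l, ((if l < i then (Rbar i l)^2 else 0) + ρ*(((d:ℝ)^2*C^2 + (d:ℝ)*C) * ρ^2)) :=
            Finset.sum_le_sum fun l _ => hper l
        _ = (∑ l, (if l < i then (Rbar i l)^2 else 0))
            + (d:ℝ)*(ρ*(((d:ℝ)^2*C^2 + (d:ℝ)*C) * ρ^2)) := by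
            rw [Finset.sum_add_distrib, Finset.sum_const, Finset.card_univ, Fintype.card_fin,
              nsmul_eq_mul]
        _ = (∑ l ∈ Finset.Iio i, (Rbar i l)^2)
            + (d:ℝ)*(ρ*(((d:ℝ)^2*C^2 + (d:ℝ)*C) * ρ^2)) := by
            congr 1
            rw [← Finset.sum_filter]
            congr 1
            ext l
            simp [Finset.mem_Iio]
    have hUii : Ubar i i ≤ ((inner ℝ (abar i) (v i) : ℝ) - 1) + (-(∑ l, Ubar l i * Rbar i l)) := by
      rw [hE i i, haa]
      linarith
    have hS2 := hL3 i
    -- error terms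
    have herr : (d:ℝ) * (3*ρ*((d:ℝ)*(C*ρ*ρ))) / 2
        + (d:ℝ)*(ρ*(((d:ℝ)^2*C^2 + (d:ℝ)*C) * ρ^2)) ≤ ε' * ρ^2 := by
      have k1 : (d:ℝ) * (3*ρ*((d:ℝ)*(C*ρ*ρ))) / 2 = (3/2) * ((d:ℝ)^2*C) * ρ^3 := by ring
      have k2 : (d:ℝ)*(ρ*(((d:ℝ)^2*C^2 + (d:ℝ)*C) * ρ^2)) = ((d:ℝ)^3*C^2 + (d:ℝ)^2*C) * ρ^3 := by
        ring
      have c3 : (0:ℝ) < C := by linarith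
      have e1 : (d:ℝ)^2*C ≤ C^3 := by nlinarith [mul_le_mul_of_nonneg_right hd2 c3.le]
      have e2 : (d:ℝ)^3*C^2 ≤ C^5 := by nlinarith [mul_le_mul_of_nonneg_right hd3 (sq_nonneg C)]
      have e3 : C^3 ≤ C^5 := by
        nlinarith [mul_nonneg (pow_nonneg c3.le 3) (show (0:ℝ) ≤ C^2 - 1 by nlinarith)]
      have e4 : C^5 * 100 ≤ C^6 := by
        nlinarith [mul_nonneg (pow_nonneg c3.le 5) (show (0:ℝ) ≤ C - 100 by linarith)]
      have e0 : (0:ℝ) ≤ C^5 := pow_nonneg c3.le 5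
      have k3 : (3/2) * ((d:ℝ)^2*C) + ((d:ℝ)^3*C^2 + (d:ℝ)^2*C) ≤ C^6 := by linarith
      have k5 : ((3/2) * ((d:ℝ)^2*C) + ((d:ℝ)^3*C^2 + (d:ℝ)^2*C)) * ρ^3 ≤ C^6 * ρ^3 :=
        mul_le_mul_of_nonneg_right k3 (by positivity)
      have k6 : C^6 * ρ^3 ≤ ε' * ρ^2 := by
        have h1 : C^6 * ρ^3 = (ρ * C^6) * ρ^2 := by ring
        rw [h1]
        exact mul_le_mul_of_nonneg_right hρe (by positivity)
      rw [k1, k2]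
      nlinarith [k5, k6]
    calc Ubar i i ≤ ((inner ℝ (abar i) (v i) : ℝ) - 1) + (-(∑ l, Ubar l i * Rbar i l)) := hUii
      _ ≤ -(1/2) * (∑ m ∈ Finset.Iio i, (inner ℝ (v m) (abar i) : ℝ)^2)
          + ((∑ l ∈ Finset.Iio i, (Rbar i l)^2)
            + (d:ℝ)*(ρ*(((d:ℝ)^2*C^2 + (d:ℝ)*C) * ρ^2))) := add_le_add hWi hRu
      _ ≤ (1/4 + ε') * ρ^2 := by linarith

set_option maxHeartbeats 1000000 in
lemma gs_main {n d : ℕ} (ε : ℝ) (hε : 0 < ε) (b C ρ : ℝ)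
    (hbdef : b = 100 * ((d:ℝ) + 1))
    (hCb : ∀ k : ℕ, k ≤ d + 1 → b ^ k ≤ C)
    (hC1 : (1:ℝ) ≤ C) (hC100 : (100:ℝ) ≤ C) (hdC : (d:ℝ) ≤ C)
    (abar : Fin d → EuclideanSpace ℝ (Fin n)) (hunit : ∀ i, ‖abar i‖ = 1)
    (Rbar : Matrix (Fin d) (Fin d) ℝ)
    (hR : ∀ j i, Rbar j i = (inner ℝ (abar j) (abar i) : ℝ) - if j = i then 1 else 0)
    (hρg : frob Rbar = ρ) (hρpos : 0 < ρ)
    (hρ3 : ρ * (C*C*C) ≤ 1) (hρe : ρ * C^6 ≤ ε)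
    (Ubar : Matrix (Fin d) (Fin d) ℝ)
    (htri : ∀ i j : Fin d, j < i → Ubar i j = 0)
    (hdecomp : ∀ i, gsNormed abar i = abar i + ∑ j, Ubar j i • abar j) :
    (∀ i, Ubar i i ≤ (1/4 + ε) * ρ^2) ∧
    (∀ j i : Fin d, j < i → |Ubar j i + Rbar j i| ≤ ε * ρ) := by
  have hb1 : (1:ℝ) ≤ b := by
    have : (0:ℝ) ≤ (d:ℝ) := Nat.cast_nonneg d
    rw [hbdef]; nlinarith
  have hb100 : (100:ℝ) ≤ b := by
    have : (0:ℝ) ≤ (d:ℝ) := Nat.cast_nonneg d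
    rw [hbdef]; nlinarith
  have hCpos : (0:ℝ) < C := by linarith
  have hd1b : (d:ℝ) + 1 ≤ b := by
    have : (0:ℝ) ≤ (d:ℝ) := Nat.cast_nonneg d
    rw [hbdef]; nlinarith
  have hd0 : (0:ℝ) ≤ (d:ℝ) := Nat.cast_nonneg d
  have hCC1 : (1:ℝ) ≤ C*C*C := by nlinarith
  have hρ1 : ρ ≤ 1 := by
    have h1 : ρ * 1 ≤ ρ * (C*C*C) := mul_le_mul_of_nonneg_left hCC1 hρpos.le
    linarith
  have hCρ100 : C * ρ ≤ 1/100 := by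
    have h : (100:ℝ) ≤ C*C := by nlinarith
    have h2 : 100*(C*ρ) ≤ (C*C)*(C*ρ) := mul_le_mul_of_nonneg_right h (by positivity)
    have h3 : (C*C)*(C*ρ) = ρ*(C*C*C) := by ring
    linarith
  have hCρ : C * ρ ≤ 1 := by linarith
  have hdρ : (d:ℝ) * ρ ≤ 1/100 := by
    have := mul_le_mul_of_nonneg_right hdC hρpos.le
    linarith
  -- entries
  have hent : ∀ k j, |Rbar k j| ≤ ρ := fun k j => hρg ▸ abs_entry_le_frob' Rbar k j
  have hRdiag : ∀ k, Rbar k k = 0 := by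
    intro k
    rw [hR k k, real_inner_self_eq_norm_sq, hunit k]
    simp
  have hRsym : ∀ k j, Rbar k j = Rbar j k := by
    intro k j
    rw [hR k j, hR j k, real_inner_comm]
    by_cases h : k = j <;> simp [h, eq_comm]
  -- linear independence and orthonormality
  have hli : LinearIndependent ℝ abar := by
    apply li_of_small' abar Rbar hR
    intro j i
    refine le_trans (hent j i) ?_
    rw [le_div_iff₀ (by positivity)]
    calc ρ * (2 * ((d:ℝ)+1)) ≤ ρ * (2 * C) := by
          have h4 : (d:ℝ) + 1 ≤ C := le_trans hd1b (by simpa using hCb 1 (by omega))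
          apply mul_le_mul_of_nonneg_left _ (le_of_lt hρpos)
          linarith
      _ ≤ 1 := by nlinarith
  obtain ⟨v, hvdef⟩ : ∃ w : Fin d → EuclideanSpace ℝ (Fin n), gsNormed abar = w := ⟨_, rfl⟩
  rw [hvdef] at hdecomp
  have hON : Orthonormal ℝ v := hvdef ▸ gsNormed_orthonormal abar hli
  have hv1 : ∀ i, ‖v i‖ = 1 := hON.1
  have hvv : ∀ (i j : Fin d), i ≠ j → (inner ℝ (v i) (v j) : ℝ) = 0 := fun i j h => hON.2 h
  -- the master equation
  have hE : ∀ k i, Ubar k i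
      = ((inner ℝ (abar k) (v i) : ℝ) - (inner ℝ (abar k) (abar i) : ℝ)) - ∑ l, Ubar l i * Rbar k l := by
    intro k i
    have h0 : (inner ℝ (abar k) (v i) : ℝ)
        = (inner ℝ (abar k) (abar i) : ℝ) + ∑ l, Ubar l i * (inner ℝ (abar k) (abar l) : ℝ) := by
      rw [hdecomp i, inner_add_right, inner_sum]
      congr 1
      exact Finset.sum_congr rfl fun l _ => real_inner_smul_right _ _ _
    have h2 : ∑ l, Ubar l i * (inner ℝ (abar k) (abar l) : ℝ)
        = (∑ l, Ubar l i * Rbar k l) + Ubar k i := by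
      have hterm : ∀ l, Ubar l i * (inner ℝ (abar k) (abar l) : ℝ)
          = Ubar l i * Rbar k l + (if k = l then Ubar l i else 0) := by
        intro l
        have hin : (inner ℝ (abar k) (abar l) : ℝ) = Rbar k l + if k = l then 1 else 0 := by
          rw [hR k l]; ring
        rw [hin]
        by_cases h : k = l <;> simp [h] <;> ring
      rw [Finset.sum_congr rfl fun l _ => hterm l, Finset.sum_add_distrib,
        Finset.sum_ite_eq Finset.univ k fun l => Ubar l i]
      simp
    rw [h2] at h0
    linarith
  -- norm of the column perturbation
  have hvma : ∀ m, v m - abar m = ∑ l, Ubar l m • abar l := by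
    intro m
    rw [hdecomp m]
    exact add_sub_cancel_left _ _
  have hnorm : ∀ m, ‖v m - abar m‖ ≤ ∑ l, |Ubar l m| := by
    intro m
    rw [hvma m]
    refine le_trans (norm_sum_le _ _) (le_of_eq (Finset.sum_congr rfl fun l _ => ?_))
    rw [norm_smul, Real.norm_eq_abs, hunit l, mul_one]
  -- Parseval package
  have hq : ∀ i : Fin d,
      (inner ℝ (v i) (abar i) : ℝ) ≤ 1 ∧ 0 ≤ (inner ℝ (v i) (abar i) : ℝ) ∧
      (inner ℝ (v i) (abar i) : ℝ)^2 + ∑ m ∈ Finset.Iio i, (inner ℝ (v m) (abar i) : ℝ)^2 = 1 := by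
    intro i
    refine ⟨?_, hvdef ▸ gsNormed_inner_self_nonneg abar i, ?_⟩
    · calc (inner ℝ (v i) (abar i) : ℝ) ≤ ‖v i‖ * ‖abar i‖ := real_inner_le_norm _ _
        _ = 1 := by rw [hv1 i, hunit i, mul_one]
    · have hsp : abar i ∈ Submodule.span ℝ (v '' Set.Iic i) := by
        rw [← hvdef]; exact gsNormed_mem_span abar i
      have hp := parseval_aux' v hON (abar i) i hsp
      rw [hunit i, one_pow] at hp
      rw [← hp, ← Finset.Iio_insert, Finset.sum_insert (by simp)]
  -- Step A : crude bound on all entries of Ubar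
  have hA : ∀ i : Fin d, ∀ j, |Ubar j i| ≤ b ^ (i.val + 1) * ρ :=
    gs_stepA b C ρ abar v Rbar Ubar hbdef hCb hb1 hC1 hC100 hdC hd0 hρpos hρ1 hρ3 hCρ hdρ
      hunit hR hent hRdiag hRsym hv1 hvv htri hE hvma hnorm hq
  -- uniform crude bound
  have hAC : ∀ (i j : Fin d), |Ubar j i| ≤ C * ρ := by
    intro i j
    refine le_trans (hA i j) (mul_le_mul_of_nonneg_right ?_ hρpos.le)
    exact hCb (i.val+1) (by omega)
  have hnormC : ∀ m, ‖v m - abar m‖ ≤ (d:ℝ) * (C * ρ) :=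
    fun m => le_trans (hnorm m) (sum_le_d' _ _ (fun l => hAC m l))
  have hacv : ∀ k i : Fin d, k ≠ i → |(inner ℝ (abar k) (v i) : ℝ)| ≤ (d:ℝ) * (C * ρ) := by
    intro k i hk
    have h1 : (inner ℝ (abar k) (v i) : ℝ) = (inner ℝ (abar k - v k) (v i) : ℝ) := by
      rw [inner_sub_left, hvv k i hk, sub_zero]
    rw [h1]
    refine le_trans (abs_real_inner_le_norm _ _) ?_
    rw [hv1 i, mul_one, ← norm_sub_rev]
    exact hnormC k
  -- Step B : refined bound for strictly upper entries
  have hstrict : ∀ j i : Fin d, j < i →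
      |Ubar j i + Rbar j i| ≤ ((d:ℝ)^2*C^2 + (d:ℝ)*C) * ρ^2 := by
    intro j i hji
    have hjne : j ≠ i := ne_of_lt hji
    have hai : (inner ℝ (abar j) (abar i) : ℝ) = Rbar j i := by rw [hR j i]; simp [hjne]
    have heq : Ubar j i + Rbar j i
        = (inner ℝ (abar j) (v i) : ℝ) - ∑ l, Ubar l i * Rbar j l := by
      rw [hE j i, hai]; ring
    have hexp : (inner ℝ (abar j) (v i) : ℝ) = - ∑ l, Ubar l j * (inner ℝ (abar l) (v i) : ℝ) := by
      have h1 : (inner ℝ (abar j) (v i) : ℝ) = (inner ℝ (abar j - v j) (v i) : ℝ) := by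
        rw [inner_sub_left, hvv j i hjne, sub_zero]
      have h2 : abar j - v j = - ∑ l, Ubar l j • abar l := by
        rw [← hvma j]; abel
      rw [h1, h2, inner_neg_left, sum_inner]
      congr 1
      exact Finset.sum_congr rfl fun l _ => real_inner_smul_left _ _ _
    have hterm1 : |∑ l, Ubar l j * (inner ℝ (abar l) (v i) : ℝ)|
        ≤ (d:ℝ) * ((C*ρ) * ((d:ℝ)*(C*ρ))) := by
      refine le_trans (Finset.abs_sum_le_sum_abs _ _) (sum_le_d' _ _ ?_)
      intro l
      rw [abs_mul]
      rcases le_or_gt l j with hlj | hjl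
      · have hlne : l ≠ i := ne_of_lt (lt_of_le_of_lt hlj hji)
        exact mul_le_mul (hAC j l) (hacv l i hlne) (abs_nonneg _) (by positivity)
      · rw [htri l j hjl, abs_zero, zero_mul]
        positivity
    have hterm2 : |∑ l, Ubar l i * Rbar j l| ≤ (d:ℝ) * ((C*ρ) * ρ) := by
      refine le_trans (Finset.abs_sum_le_sum_abs _ _) (sum_le_d' _ _ ?_)
      intro l
      rw [abs_mul]
      exact mul_le_mul (hAC i l) (hent j l) (abs_nonneg _) (by positivity)
    rw [heq, hexp]
    calc |(- ∑ l, Ubar l j * (inner ℝ (abar l) (v i) : ℝ)) - ∑ l, Ubar l i * Rbar j l|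
        ≤ |(- ∑ l, Ubar l j * (inner ℝ (abar l) (v i) : ℝ))| + |∑ l, Ubar l i * Rbar j l| :=
          abs_sub _ _
      _ = |∑ l, Ubar l j * (inner ℝ (abar l) (v i) : ℝ)| + |∑ l, Ubar l i * Rbar j l| := by
          rw [abs_neg]
      _ ≤ (d:ℝ) * ((C*ρ) * ((d:ℝ)*(C*ρ))) + (d:ℝ) * ((C*ρ) * ρ) := add_le_add hterm1 hterm2
      _ = ((d:ℝ)^2*C^2 + (d:ℝ)*C) * ρ^2 := by ring
  -- pair-sum bound
  have hL3 : ∀ i : Fin d, ∑ l ∈ Finset.Iio i, (Rbar i l)^2 ≤ ρ^2 / 2 := by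
    intro i
    have hfro : ∑ k, ∑ l, (Rbar k l)^2 = ρ^2 := by rw [← hρg, frob_sq']
    have hsub : ∑ k ∈ insert i (Finset.Iio i), (∑ l, (Rbar k l)^2)
        ≤ ∑ k, ∑ l, (Rbar k l)^2 :=
      Finset.sum_le_sum_of_subset_of_nonneg (Finset.subset_univ _)
        (fun k _ _ => Finset.sum_nonneg fun l _ => sq_nonneg _)
    rw [Finset.sum_insert (by simp)] at hsub
    have hii : ∑ l ∈ Finset.Iio i, (Rbar i l)^2 ≤ ∑ l, (Rbar i l)^2 :=
      Finset.sum_le_sum_of_subset_of_nonneg (Finset.subset_univ _) (fun l _ _ => sq_nonneg _)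
    have hki : ∑ k ∈ Finset.Iio i, (Rbar k i)^2 ≤ ∑ k ∈ Finset.Iio i, ∑ l, (Rbar k l)^2 :=
      Finset.sum_le_sum fun k _ => Finset.single_le_sum (f := fun l => (Rbar k l)^2)
        (fun _ _ => sq_nonneg _) (Finset.mem_univ i)
    have h2 : ∑ k ∈ Finset.Iio i, (Rbar k i)^2 = ∑ l ∈ Finset.Iio i, (Rbar i l)^2 :=
      Finset.sum_congr rfl fun k _ => by rw [hRsym k i]
    linarith
  -- conclusions
  have hD0 : (0:ℝ) ≤ (d:ℝ)^2*C^2 + (d:ℝ)*C := by positivity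
  have hd2 : (d:ℝ)^2 ≤ C^2 := by nlinarith
  have hd3 : (d:ℝ)^3 ≤ C^3 := by nlinarith
  constructor
  · exact gs_diag b C ρ ε abar v Rbar Ubar hbdef hCb hb1 hC1 hC100 hdC hd0 hρpos hρ1 hρ3
      hCρ hdρ hunit hR hent hRdiag hRsym hv1 hvv htri hE hvma hnorm hq hε hρe hAC hstrict hL3
      hd2 hd3
  · -- strictly upper entries
    intro j i hji
    refine le_trans (hstrict j i hji) ?_
    have k1 : ((d:ℝ)^2*C^2 + (d:ℝ)*C) ≤ C^5 := by nlinarith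
    have k2 : ((d:ℝ)^2*C^2 + (d:ℝ)*C) * ρ^2 ≤ C^5 * ρ^2 :=
      mul_le_mul_of_nonneg_right k1 (by positivity)
    have k3 : C^5 * ρ^2 ≤ ε * ρ := by
      have : C^5 * ρ ≤ ε := by nlinarith
      nlinarith
    linarith


/-- Let Ā = [ā1,…,ā_d] have unit-norm columns, R̄ = ĀᵀĀ − I, and let V be the
Gram–Schmidt orthonormalization of Ā, written V − Ā = Ā Ū with Ū upper triangular.  Then as
R̄ → 0, the diagonal entries satisfy lim sup ū_{ii}/‖R̄‖_F² ≤ 1/4 and the strictly upper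
entries satisfy (ū_{ji} + r̄_{ji})/‖R̄‖_F → 0, i.e. for every ε > 0 there is η > 0 such that
whenever 0 < ‖R̄‖_F < η one has ū_{ii} ≤ (1/4 + ε)‖R̄‖_F² and |ū_{ji} + r̄_{ji}| ≤ ε‖R̄‖_F. -/
theorem gram_schmidt_perturbation {n d : ℕ} :
    ∀ ε > (0:ℝ), ∃ η > (0:ℝ),
      ∀ (abar : Fin d → EuclideanSpace ℝ (Fin n)), (∀ i, ‖abar i‖ = 1) →
      ∀ (Rbar : Matrix (Fin d) (Fin d) ℝ),
        (∀ j i, Rbar j i = (inner ℝ (abar j) (abar i) : ℝ) - if j = i then 1 else 0) →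
        0 < frob Rbar → frob Rbar < η →
      ∀ (Ubar : Matrix (Fin d) (Fin d) ℝ),
        (∀ i j : Fin d, j < i → Ubar i j = 0) →
        (∀ i, gsNormed abar i = abar i + ∑ j, Ubar j i • abar j) →
        (∀ i, Ubar i i ≤ (1/4 + ε) * (frob Rbar)^2) ∧
        (∀ j i : Fin d, j < i → |Ubar j i + Rbar j i| ≤ ε * frob Rbar) := by
  intro ε hε
  have hd0 : (0:ℝ) ≤ (d:ℝ) := Nat.cast_nonneg d
  have hb1 : (1:ℝ) ≤ 100*((d:ℝ)+1) := by nlinarith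
  have hb100 : (100:ℝ) ≤ 100*((d:ℝ)+1) := by nlinarith
  have hKpos : (0:ℝ) < (100*((d:ℝ)+1))^(d+1) := pow_pos (by nlinarith) _
  refine ⟨min (1 / ((100*((d:ℝ)+1))^(d+1) * (100*((d:ℝ)+1))^(d+1) * (100*((d:ℝ)+1))^(d+1)))
    (ε / ((100*((d:ℝ)+1))^(d+1))^6), lt_min (by positivity) (by positivity), ?_⟩
  intro abar hunit Rbar hR hfpos hfη Ubar htri hdecomp
  have hbK : (100*((d:ℝ)+1)) ≤ (100*((d:ℝ)+1))^(d+1) := le_self_pow₀ hb1 (by omega)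
  refine gs_main ε hε (100*((d:ℝ)+1)) ((100*((d:ℝ)+1))^(d+1)) (frob Rbar) rfl
    (fun k hk => pow_le_pow_right₀ hb1 hk) (one_le_pow₀ hb1) (le_trans hb100 hbK)
    (by nlinarith) abar hunit Rbar hR rfl hfpos ?_ ?_ Ubar htri hdecomp
  · have h1 := lt_of_lt_of_le hfη (min_le_left _ _)
    rw [lt_div_iff₀ (by positivity)] at h1
    linarith
  · have h1 := lt_of_lt_of_le hfη (min_le_right _ _)
    rw [lt_div_iff₀ (by positivity)] at h1
    linarith
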